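/- arXiv:math/0505162 — 4 statements merged into one kernel-verified Lean document; each statement's English description precedes it below -/
import Mathlib

section
/- Let L be a linear subspace of n×n real matrices closed under transposition, Schur product, and (X,Y) ↦ XDY where D is diagonal with positive diagonal entries. Assume no index i is such that the i-th row of every matrix in L is zero, and no two distinct indices i ≠ j are such that the i-th and j-th rows are parallel in every matrix of L. Then L contains the identity matrix. -/
open Matrix Polynomial Finset

section SciAux

variable {n : ℕ} (L : Submodule ℝ (Matrix (Fin n) (Fin n) ℝ))
  (D : Matrix (Fin n) (Fin n) ℝ)

/-- The support relation of the subspace `L`. -/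
def sci_Sp (a b : Fin n) : Prop := ∃ M ∈ L, M a b ≠ 0

lemma sci_tripMul (hDdiag : D.IsDiag) (M N : Matrix (Fin n) (Fin n) ℝ) (a b : Fin n) :
    (M * D * N) a b = ∑ m, M a m * D m m * N m b := by
  rw [Matrix.mul_apply]
  refine Finset.sum_congr rfl fun s _ => ?_
  rw [Matrix.mul_apply, Finset.sum_eq_single s]
  · intro t _ hts
    rw [hDdiag hts, mul_zero]
  · intro h; exact absurd (Finset.mem_univ s) h

lemma sci_hpow (hSchur : ∀ M ∈ L, ∀ N ∈ L, Matrix.hadamard M N ∈ L)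
    {M : Matrix (Fin n) (Fin n) ℝ} (hM : M ∈ L) (j : ℕ) :
    Matrix.of (fun a b => M a b ^ (j + 1)) ∈ L := by
  induction j with
  | zero => simp only [zero_add, pow_one]; exact hM
  | succ j ih =>
    have h := hSchur _ ih _ hM
    have e : Matrix.hadamard (Matrix.of fun a b => M a b ^ (j + 1)) M
        = Matrix.of (fun a b => M a b ^ (j + 1 + 1)) := by
      ext a b
      simp [Matrix.hadamard, pow_succ]
    rwa [e] at h

lemma sci_happly (hSchur : ∀ M ∈ L, ∀ N ∈ L, Matrix.hadamard M N ∈ L)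
    {M : Matrix (Fin n) (Fin n) ℝ} (hM : M ∈ L) (p : ℝ[X]) (hp : p.eval 0 = 0) :
    Matrix.of (fun a b => p.eval (M a b)) ∈ L := by
  obtain ⟨q, hq⟩ : (X : ℝ[X]) ∣ p := by
    rwa [Polynomial.X_dvd_iff, Polynomial.coeff_zero_eq_eval_zero]
  have key : ∀ q : ℝ[X], Matrix.of (fun a b => M a b * q.eval (M a b)) ∈ L := by
    intro q
    induction q using Polynomial.induction_on' with
    | add p1 p2 h1 h2 =>
      have e : Matrix.of (fun a b => M a b * (p1 + p2).eval (M a b))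
          = Matrix.of (fun a b => M a b * p1.eval (M a b))
            + Matrix.of (fun a b => M a b * p2.eval (M a b)) := by
        ext a b; simp [mul_add]
      rw [e]; exact L.add_mem h1 h2
    | monomial j a =>
      have e : Matrix.of (fun x y => M x y * (monomial j a).eval (M x y))
          = a • Matrix.of (fun x y => M x y ^ (j + 1)) := by
        ext x y
        simp [Polynomial.eval_monomial, pow_succ]
        ring
      rw [e]; exact L.smul_mem a (sci_hpow L hSchur hM j)
  have e : Matrix.of (fun a b => p.eval (M a b))
      = Matrix.of (fun a b => M a b * q.eval (M a b)) := by
    ext a b; rw [hq]; simp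
  rw [e]; exact key q

lemma sci_interp (s : Finset ℝ) (g : ℝ → ℝ) : ∃ p : ℝ[X], ∀ x ∈ s, p.eval x = g x := by
  refine ⟨Lagrange.interpolate s id g, fun x hx => ?_⟩
  have := Lagrange.eval_interpolate_at_node (v := id) (s := s) g (Set.injOn_id _) hx
  simpa using this

lemma sci_Sp_symm (hT : ∀ M ∈ L, Mᵀ ∈ L) {a b : Fin n} (h : sci_Sp L a b) :
    sci_Sp L b a := by
  obtain ⟨M, hM, hne⟩ := h
  exact ⟨Mᵀ, hT M hM, hne⟩

lemma sci_Sp_trans (hDdiag : D.IsDiag) (hDpos : ∀ i, 0 < D i i)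
    (hSchur : ∀ M ∈ L, ∀ N ∈ L, Matrix.hadamard M N ∈ L)
    (hConc : ∀ M ∈ L, ∀ N ∈ L, M * D * N ∈ L)
    {a c b : Fin n} (h1 : sci_Sp L a c) (h2 : sci_Sp L c b) : sci_Sp L a b := by
  obtain ⟨M, hM, hMa⟩ := h1
  obtain ⟨N, hN, hNb⟩ := h2
  refine ⟨Matrix.hadamard M M * D * Matrix.hadamard N N,
    hConc _ (hSchur _ hM _ hM) _ (hSchur _ hN _ hN), ?_⟩
  rw [sci_tripMul D hDdiag]
  have pos : 0 < ∑ m, Matrix.hadamard M M a m * D m m * Matrix.hadamard N N m b := by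
    apply Finset.sum_pos'
    · intro m _
      simp only [Matrix.hadamard_apply]
      exact mul_nonneg (mul_nonneg (mul_self_nonneg _) (hDpos m).le) (mul_self_nonneg _)
    · refine ⟨c, Finset.mem_univ c, ?_⟩
      simp only [Matrix.hadamard_apply]
      exact mul_pos (mul_pos (mul_self_pos.2 hMa) (hDpos c)) (mul_self_pos.2 hNb)
  exact pos.ne'

lemma sci_exC (hSchur : ∀ M ∈ L, ∀ N ∈ L, Matrix.hadamard M N ∈ L) :
    ∃ C ∈ L, (∀ a b : Fin n, C a b ≠ 0 ↔ sci_Sp L a b) := by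
  classical
  have hW : ∀ ab : Fin n × Fin n, ∃ W, W ∈ L ∧ (sci_Sp L ab.1 ab.2 → W ab.1 ab.2 ≠ 0) := by
    rintro ⟨a, b⟩
    by_cases h : sci_Sp L a b
    · obtain ⟨M, hM, hne⟩ := h; exact ⟨M, hM, fun _ => hne⟩
    · exact ⟨0, L.zero_mem, fun h' => absurd h' h⟩
  choose W hWL hWne using hW
  refine ⟨∑ ab : Fin n × Fin n, Matrix.hadamard (W ab) (W ab),
    Submodule.sum_mem L (fun ab _ => hSchur _ (hWL ab) _ (hWL ab)), ?_⟩
  intro a b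
  constructor
  · intro h
    by_contra hs
    apply h
    rw [Matrix.sum_apply]
    apply Finset.sum_eq_zero
    intro ab _
    have h0 : W ab a b = 0 := by
      by_contra h0; exact hs ⟨W ab, hWL ab, h0⟩
    simp [Matrix.hadamard_apply, h0]
  · intro hs
    have pos : 0 < ∑ ab : Fin n × Fin n, Matrix.hadamard (W ab) (W ab) a b := by
      apply Finset.sum_pos'
      · intro ab _; simp only [Matrix.hadamard_apply]; exact mul_self_nonneg _
      · exact ⟨(a, b), Finset.mem_univ _, by
          simp only [Matrix.hadamard_apply]
          exact mul_self_pos.2 (hWne (a, b) hs)⟩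
    rw [Matrix.sum_apply]
    exact pos.ne'

lemma sci_exE
    (hSchur : ∀ M ∈ L, ∀ N ∈ L, Matrix.hadamard M N ∈ L) :
    ∃ E ∈ L, ∀ a b : Fin n, sci_Sp L a b → E a b = 1 := by
  classical
  obtain ⟨C, hCL, hCsp⟩ := sci_exC L hSchur
  obtain ⟨p, hp⟩ := sci_interp (insert (0 : ℝ)
    (Finset.image (fun ab : Fin n × Fin n => C ab.1 ab.2) Finset.univ))
    (fun x => if x = 0 then 0 else 1)
  have hp0 : p.eval 0 = 0 := by
    have := hp 0 (Finset.mem_insert_self _ _)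
    simpa using this
  refine ⟨Matrix.of (fun a b => p.eval (C a b)), sci_happly L hSchur hCL p hp0, ?_⟩
  intro a b hSp
  have hmem : C a b ∈ insert (0 : ℝ)
      (Finset.image (fun ab : Fin n × Fin n => C ab.1 ab.2) Finset.univ) :=
    Finset.mem_insert_of_mem (Finset.mem_image.2 ⟨(a, b), Finset.mem_univ _, rfl⟩)
  have := hp _ hmem
  simp only [Matrix.of_apply, this]
  rw [if_neg ((hCsp a b).2 hSp)]

lemma sci_diag (hDdiag : D.IsDiag) (hDpos : ∀ i, 0 < D i i)
    (hT : ∀ M ∈ L, Mᵀ ∈ L)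
    (hConc : ∀ M ∈ L, ∀ N ∈ L, M * D * N ∈ L)
    (hrow : ∀ i : Fin n, ∃ M ∈ L, ∃ j, M i j ≠ 0) :
    ∀ i : Fin n, ∃ M ∈ L, M i i ≠ 0 := by
  intro i
  obtain ⟨M0, hM0, j0, hj0⟩ := hrow i
  refine ⟨M0 * D * M0ᵀ, hConc _ hM0 _ (hT _ hM0), ?_⟩
  rw [sci_tripMul D hDdiag]
  have e : ∀ m : Fin n, M0 i m * D m m * M0ᵀ m i = M0 i m * M0 i m * D m m := by
    intro m
    rw [Matrix.transpose_apply]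
    ring
  rw [Finset.sum_congr rfl (fun m _ => e m)]
  have pos : 0 < ∑ m, M0 i m * M0 i m * D m m :=
    Finset.sum_pos' (fun m _ => mul_nonneg (mul_self_nonneg _) (hDpos m).le)
      ⟨j0, Finset.mem_univ _, mul_pos (mul_self_pos.2 hj0) (hDpos j0)⟩
  exact pos.ne'

lemma sci_key
    (hDdiag : D.IsDiag) (hDpos : ∀ i, 0 < D i i)
    (hT : ∀ M ∈ L, Mᵀ ∈ L)
    (hSchur : ∀ M ∈ L, ∀ N ∈ L, Matrix.hadamard M N ∈ L)
    (hConc : ∀ M ∈ L, ∀ N ∈ L, M * D * N ∈ L)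
    (hpar : ∀ i j : Fin n, i ≠ j → ∃ M ∈ L,
      ¬ ∃ a b : ℝ, (a ≠ 0 ∨ b ≠ 0) ∧ ∀ l, a * M i l + b * M j l = 0)
    (hdiag : ∀ i : Fin n, ∃ M ∈ L, M i i ≠ 0)
    (k l i : Fin n) (hkl : k ≠ l) :
    ∃ M ∈ L, M k l ≠ M i i := by
  classical
  by_contra hcon
  push_neg at hcon
  obtain ⟨E, hEL, hE1⟩ := sci_exE L hSchur
  have tripMul := sci_tripMul D hDdiag
  -- Sp k l
  have hSkl : sci_Sp L k l := by
    obtain ⟨M0, hM0, hne⟩ := hdiag i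
    exact ⟨M0, hM0, by rw [hcon M0 hM0]; exact hne⟩
  have hSlk := sci_Sp_symm L hT hSkl
  -- the k-th and l-th rows of every matrix in L coincide
  have rows : ∀ M ∈ L, ∀ m : Fin n, M k m = M l m := by
    intro M hM
    have hMT := hT M hM
    have hMM : Matrix.hadamard M M ∈ L := hSchur _ hM _ hM
    -- S1
    have h1 := hcon _ (hConc _ hM _ hMT)
    rw [tripMul, tripMul] at h1
    simp only [Matrix.transpose_apply] at h1
    have hS1 : ∑ m, M k m * D m m * M l m = ∑ m, M i m * M i m * D m m := by
      rw [h1]; exact Finset.sum_congr rfl fun m _ => by ring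
    -- S2
    have h2 := hcon _ (hConc _ hMM _ (hT _ hEL))
    rw [tripMul, tripMul] at h2
    simp only [Matrix.hadamard_apply, Matrix.transpose_apply] at h2
    have h2L : ∑ m, M k m * M k m * D m m * E l m = ∑ m, M k m * M k m * D m m := by
      refine Finset.sum_congr rfl fun m _ => ?_
      by_cases hm : M k m = 0
      · simp [hm]
      · rw [hE1 _ _ (sci_Sp_trans L D hDdiag hDpos hSchur hConc hSlk ⟨M, hM, hm⟩), mul_one]
    have h2R : ∑ m, M i m * M i m * D m m * E i m = ∑ m, M i m * M i m * D m m := by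
      refine Finset.sum_congr rfl fun m _ => ?_
      by_cases hm : M i m = 0
      · simp [hm]
      · rw [hE1 _ _ (⟨M, hM, hm⟩ : sci_Sp L i m), mul_one]
    have hS2 : ∑ m, M k m * M k m * D m m = ∑ m, M i m * M i m * D m m := by
      rw [← h2L, h2, h2R]
    -- S3
    have h3 := hcon _ (hConc _ hEL _ (hT _ hMM))
    rw [tripMul, tripMul] at h3
    simp only [Matrix.hadamard_apply, Matrix.transpose_apply] at h3
    have h3L : ∑ m, E k m * D m m * (M l m * M l m) = ∑ m, M l m * M l m * D m m := by
      refine Finset.sum_congr rfl fun m _ => ?_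
      by_cases hm : M l m = 0
      · simp [hm]
      · rw [hE1 _ _ (sci_Sp_trans L D hDdiag hDpos hSchur hConc hSkl ⟨M, hM, hm⟩)]; ring
    have h3R : ∑ m, E i m * D m m * (M i m * M i m) = ∑ m, M i m * M i m * D m m := by
      refine Finset.sum_congr rfl fun m _ => ?_
      by_cases hm : M i m = 0
      · simp [hm]
      · rw [hE1 _ _ (⟨M, hM, hm⟩ : sci_Sp L i m)]; ring
    have hS3 : ∑ m, M l m * M l m * D m m = ∑ m, M i m * M i m * D m m := by
      rw [← h3L, h3, h3R]
    -- combine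
    have main : ∑ m, (M k m - M l m) * (M k m - M l m) * D m m = 0 := by
      have expand : ∑ m, (M k m - M l m) * (M k m - M l m) * D m m
          = (∑ m, M k m * M k m * D m m) + (∑ m, M l m * M l m * D m m)
            - 2 * ∑ m, M k m * D m m * M l m := by
        rw [Finset.mul_sum, ← Finset.sum_add_distrib, ← Finset.sum_sub_distrib]
        exact Finset.sum_congr rfl fun m _ => by ring
      rw [expand, hS1, hS2, hS3]
      ring
    intro m
    have nonneg : ∀ m ∈ (Finset.univ : Finset (Fin n)),
        0 ≤ (M k m - M l m) * (M k m - M l m) * D m m :=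
      fun m _ => mul_nonneg (mul_self_nonneg _) (hDpos m).le
    have hzero := (Finset.sum_eq_zero_iff_of_nonneg nonneg).1 main m (Finset.mem_univ m)
    have h0 : (M k m - M l m) * (M k m - M l m) = 0 := by
      rcases mul_eq_zero.1 hzero with h | h
      · exact h
      · exact absurd h (hDpos m).ne'
    have := mul_self_eq_zero.1 h0
    linarith
  -- contradiction with hpar
  obtain ⟨M1, hM1, hnp⟩ := hpar k l hkl
  exact hnp ⟨1, -1, Or.inl one_ne_zero, fun m => by rw [rows M1 hM1 m]; ring⟩

/-- The family of linear conditions to be made simultaneously nonzero. -/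
noncomputable def sci_phi {n : ℕ} (σ : Fin n × Fin n × Fin n)
    (M : Matrix (Fin n) (Fin n) ℝ) : ℝ :=
  if σ.1 = σ.2.1 then M σ.2.2 σ.2.2 else M σ.1 σ.2.1 - M σ.2.2 σ.2.2

lemma sci_generic
    (N : Fin n × Fin n × Fin n → Matrix (Fin n) (Fin n) ℝ)
    (hNL : ∀ σ, N σ ∈ L) (hNφ : ∀ σ, sci_phi σ (N σ) ≠ 0) :
    ∃ A ∈ L, ∀ σ, sci_phi σ A ≠ 0 := by
  classical
  set e : Fin n × Fin n × Fin n → ℕ := fun σ => ((Fintype.equivFin _) σ : ℕ) with he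
  have einj : Function.Injective e :=
    fun σ τ h => (Fintype.equivFin _).injective (Fin.val_injective h)
  set P : Fin n × Fin n × Fin n → ℝ[X] :=
    fun σ => ∑ τ : Fin n × Fin n × Fin n, C (sci_phi σ (N τ)) * X ^ (e τ) with hP
  have hPne : ∀ σ, P σ ≠ 0 := by
    intro σ hzero
    have hcoeff : (P σ).coeff (e σ) = sci_phi σ (N σ) := by
      rw [hP]
      rw [Polynomial.finset_sum_coeff]
      rw [Finset.sum_eq_single σ]
      · simp [Polynomial.coeff_C_mul, Polynomial.coeff_X_pow]
      · intro τ _ hτ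
        have hne : e σ ≠ e τ := fun h => hτ (einj h).symm
        simp [Polynomial.coeff_C_mul, Polynomial.coeff_X_pow, hne]
      · intro h; exact absurd (Finset.mem_univ σ) h
    rw [hzero] at hcoeff
    exact hNφ σ (by simpa using hcoeff.symm)
  have hfin : (⋃ σ : Fin n × Fin n × Fin n, {t : ℝ | (P σ).eval t = 0}).Finite :=
    Set.finite_iUnion fun σ => Polynomial.finite_setOf_isRoot (hPne σ)
  obtain ⟨t, ht⟩ := hfin.infinite_compl.nonempty
  have htσ : ∀ σ, (P σ).eval t ≠ 0 := by
    intro σ h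
    exact ht (Set.mem_iUnion.2 ⟨σ, h⟩)
  refine ⟨∑ τ : Fin n × Fin n × Fin n, (t ^ e τ) • N τ,
    Submodule.sum_mem L (fun τ _ => L.smul_mem _ (hNL τ)), ?_⟩
  intro σ
  have hentry : ∀ a b : Fin n,
      (∑ τ : Fin n × Fin n × Fin n, (t ^ e τ) • N τ) a b
        = ∑ τ : Fin n × Fin n × Fin n, t ^ e τ * N τ a b := by
    intro a b
    rw [Matrix.sum_apply]
    exact Finset.sum_congr rfl fun τ _ => by simp
  have hevalP : (P σ).eval t = ∑ τ : Fin n × Fin n × Fin n, sci_phi σ (N τ) * t ^ e τ := by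
    rw [hP, Polynomial.eval_finset_sum]
    exact Finset.sum_congr rfl fun τ _ => by simp
  have hφval : sci_phi σ (∑ τ : Fin n × Fin n × Fin n, (t ^ e τ) • N τ) = (P σ).eval t := by
    rw [hevalP]
    unfold sci_phi
    by_cases h : σ.1 = σ.2.1
    · rw [if_pos h, hentry]
      exact Finset.sum_congr rfl fun τ _ => by rw [if_pos h]; ring
    · rw [if_neg h, hentry, hentry, ← Finset.sum_sub_distrib]
      exact Finset.sum_congr rfl fun τ _ => by rw [if_neg h]; ring
  rw [hφval]
  exact htσ σ

end SciAux

/-- A linear subspace `L` of `n × n` real matrices closed under transposition,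
Schur product and `(X, Y) ↦ X * D * Y` (`D` diagonal with positive diagonal), such that no row
is zero in every matrix of `L` and no two distinct rows are parallel in every matrix of `L`,
contains the identity matrix. -/
theorem subspace_contains_identity {n : ℕ}
    (L : Submodule ℝ (Matrix (Fin n) (Fin n) ℝ))
    (D : Matrix (Fin n) (Fin n) ℝ) (hDdiag : D.IsDiag) (hDpos : ∀ i, 0 < D i i)
    (hT : ∀ M ∈ L, Mᵀ ∈ L)
    (hSchur : ∀ M ∈ L, ∀ N ∈ L, Matrix.hadamard M N ∈ L)
    (hConc : ∀ M ∈ L, ∀ N ∈ L, M * D * N ∈ L)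
    (hrow : ∀ i : Fin n, ∃ M ∈ L, ∃ j, M i j ≠ 0)
    (hpar : ∀ i j : Fin n, i ≠ j → ∃ M ∈ L,
      ¬ ∃ a b : ℝ, (a ≠ 0 ∨ b ≠ 0) ∧ ∀ l, a * M i l + b * M j l = 0) :
    (1 : Matrix (Fin n) (Fin n) ℝ) ∈ L := by
  classical
  have hdiag := sci_diag L D hDdiag hDpos hT hConc hrow
  -- witnesses for the linear conditions
  have hwit : ∀ σ : Fin n × Fin n × Fin n, ∃ M, M ∈ L ∧ sci_phi σ M ≠ 0 := by
    rintro ⟨k, l, i⟩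
    by_cases h : k = l
    · obtain ⟨M, hM, hne⟩ := hdiag i
      exact ⟨M, hM, by simpa [sci_phi, h] using hne⟩
    · obtain ⟨M, hM, hne⟩ := sci_key L D hDdiag hDpos hT hSchur hConc hpar hdiag k l i h
      exact ⟨M, hM, by simpa [sci_phi, h] using sub_ne_zero.2 hne⟩
  choose N hNL hNφ using hwit
  obtain ⟨A, hAL, hAφ⟩ := sci_generic L N hNL hNφ
  have hA0 : ∀ i : Fin n, A i i ≠ 0 := fun i => by simpa [sci_phi] using hAφ (i, i, i)
  have hAkl : ∀ k l i : Fin n, k ≠ l → A k l ≠ A i i := by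
    intro k l i h
    have h' := hAφ (k, l, i)
    simp only [sci_phi, if_neg h] at h'
    exact sub_ne_zero.1 h'
  -- interpolate to get the identity
  obtain ⟨p, hp⟩ := sci_interp (insert (0 : ℝ)
    (Finset.image (fun ab : Fin n × Fin n => A ab.1 ab.2) Finset.univ))
    (fun x => if ∃ i, A i i = x then 1 else 0)
  have hp0 : p.eval 0 = 0 := by
    rw [hp 0 (Finset.mem_insert_self _ _), if_neg]
    rintro ⟨i, hi⟩
    exact hA0 i hi
  have hFL := sci_happly L hSchur hAL p hp0
  have hFI : Matrix.of (fun a b => p.eval (A a b)) = 1 := by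
    ext a b
    have hmem : A a b ∈ insert (0 : ℝ)
        (Finset.image (fun ab : Fin n × Fin n => A ab.1 ab.2) Finset.univ) :=
      Finset.mem_insert_of_mem (Finset.mem_image.2 ⟨(a, b), Finset.mem_univ _, rfl⟩)
    rw [Matrix.of_apply, hp _ hmem]
    by_cases hab : a = b
    · subst hab
      rw [if_pos ⟨a, rfl⟩, Matrix.one_apply_eq]
    · rw [if_neg, Matrix.one_apply_ne hab]
      rintro ⟨i, hi⟩
      exact hAkl a b i hab hi.symm
  rwa [hFI] at hFL
end

section
/- Let B be a real symmetric n×n matrix and D a diagonal matrix with positive diagonal entries. Then there exist t ≥ 2 and real coefficients a₂,…,a_t such that B = ∑_{s=2}^{t} a_s (B D²)^{s-1} B. -/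
open Matrix Finset Polynomial

private lemma helper_from_poly {n : ℕ} (M : Matrix (Fin n) (Fin n) ℝ) (p : ℝ[X])
    (h0 : p.coeff 0 = 0) (h1 : p.coeff 1 ≠ 0) (hp : Polynomial.aeval M p = 0) :
    ∃ (t : ℕ) (a : ℕ → ℝ), 2 ≤ t ∧ M = ∑ s ∈ Finset.Icc 2 t, a s • M ^ s := by
  have hsum : (0 : Matrix (Fin n) (Fin n) ℝ)
      = ∑ i ∈ Finset.range (p.natDegree + 1), p.coeff i • M ^ i := by
    rw [← hp]; exact Polynomial.aeval_eq_sum_range M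
  have hd1 : 1 ≤ p.natDegree := Polynomial.le_natDegree_of_ne_zero h1
  rcases lt_or_ge p.natDegree 2 with hlt | hge
  · have hd : p.natDegree = 1 := by omega
    rw [hd] at hsum
    have h01 : Finset.range 2 = {0, 1} := by decide
    rw [h01, Finset.sum_insert (by decide), Finset.sum_singleton, h0, zero_smul, zero_add,
      pow_one] at hsum
    have hM0 : M = 0 := by
      rcases smul_eq_zero.mp hsum.symm with h | h
      · exact absurd h h1
      · exact h
    exact ⟨2, 0, le_refl 2, by simp [hM0]⟩
  · refine ⟨p.natDegree, fun s => -(p.coeff s) / p.coeff 1, hge, ?_⟩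
    rw [Finset.range_eq_Ico,
      ← Finset.sum_Ico_consecutive _ (by omega : 0 ≤ 2) (by omega : 2 ≤ p.natDegree + 1)] at hsum
    have h01 : Finset.Ico 0 2 = {0, 1} := by decide
    rw [h01, Finset.sum_insert (by decide), Finset.sum_singleton, h0, zero_smul, zero_add,
      pow_one] at hsum
    have hkey : p.coeff 1 • M = -∑ i ∈ Finset.Ico 2 (p.natDegree + 1), p.coeff i • M ^ i :=
      eq_neg_of_add_eq_zero_left hsum.symm
    rw [← Finset.Ico_add_one_right_eq_Icc]
    apply smul_right_injective (Matrix (Fin n) (Fin n) ℝ) h1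
    show p.coeff 1 • M = p.coeff 1 • ∑ s ∈ Finset.Ico 2 (p.natDegree + 1),
      (-(p.coeff s) / p.coeff 1) • M ^ s
    rw [hkey, Finset.smul_sum]
    rw [← Finset.sum_neg_distrib]
    refine Finset.sum_congr rfl fun s _ => ?_
    rw [smul_smul, ← neg_smul]
    congr 1
    field_simp

private lemma symm_eq_combo_of_powers {n : ℕ} (M : Matrix (Fin n) (Fin n) ℝ)
    (hM : Mᵀ = M) :
    ∃ (t : ℕ) (a : ℕ → ℝ), 2 ≤ t ∧ M = ∑ s ∈ Finset.Icc 2 t, a s • M ^ s := by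
  have hint : IsIntegral ℝ M := IsIntegral.of_finite ℝ M
  have hm0 : Polynomial.aeval M (minpoly ℝ M) = 0 := minpoly.aeval ℝ M
  by_cases hc0 : (minpoly ℝ M).coeff 0 = 0
  · have hc1 : (minpoly ℝ M).coeff 1 ≠ 0 := by
      intro hc1
      have hX2 : (X : ℝ[X]) ^ 2 ∣ minpoly ℝ M := by
        rw [Polynomial.X_pow_dvd_iff]
        intro d hd
        interval_cases d
        · exact hc0
        · exact hc1
      obtain ⟨q, hq⟩ := hX2
      have h2 : M ^ 2 * Polynomial.aeval M q = 0 := by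
        have h := hm0
        rw [hq, _root_.map_mul, map_pow, Polynomial.aeval_X] at h
        exact h
      set N := Polynomial.aeval M q with hN
      have hMN : M * N = 0 := by
        have h3 : (M * N)ᴴ * (M * N) = 0 := by
          rw [conjTranspose_eq_transpose_of_trivial, transpose_mul, hM]
          calc Nᵀ * M * (M * N) = Nᵀ * (M ^ 2 * N) := by
                simp only [pow_two, mul_assoc]
            _ = 0 := by rw [h2, mul_zero]
        exact conjTranspose_mul_self_eq_zero.mp h3
      have hXq : Polynomial.aeval M ((X : ℝ[X]) * q) = 0 := by
        rw [_root_.map_mul, Polynomial.aeval_X]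
        exact hMN
      have hdvd : minpoly ℝ M ∣ (X : ℝ[X]) * q := minpoly.dvd ℝ M hXq
      have hq0 : q ≠ 0 := by
        intro h
        rw [h, mul_zero] at hq
        exact minpoly.ne_zero hint hq
      have hXq0 : (X : ℝ[X]) * q ≠ 0 := mul_ne_zero Polynomial.X_ne_zero hq0
      have hle := Polynomial.natDegree_le_of_dvd hdvd hXq0
      have e1 : ((X : ℝ[X]) * q).natDegree = 1 + q.natDegree := by
        rw [Polynomial.natDegree_mul Polynomial.X_ne_zero hq0, Polynomial.natDegree_X]
      have e2 : (minpoly ℝ M).natDegree = 2 + q.natDegree := by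
        rw [hq, Polynomial.natDegree_mul (pow_ne_zero _ Polynomial.X_ne_zero) hq0,
          Polynomial.natDegree_X_pow]
      omega
    exact helper_from_poly M (minpoly ℝ M) hc0 hc1 hm0
  · have hc1 : ((X : ℝ[X]) * minpoly ℝ M).coeff 1 ≠ 0 := by
      rw [Polynomial.coeff_X_mul]
      exact hc0
    have h0' : ((X : ℝ[X]) * minpoly ℝ M).coeff 0 = 0 := by
      rw [Polynomial.mul_coeff_zero, Polynomial.coeff_X_zero, zero_mul]
    have hann : Polynomial.aeval M ((X : ℝ[X]) * minpoly ℝ M) = 0 := by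
      rw [_root_.map_mul, Polynomial.aeval_X, hm0, mul_zero]
    exact helper_from_poly M ((X : ℝ[X]) * minpoly ℝ M) h0' hc1 hann

/-- for a real symmetric matrix `B` and a diagonal matrix `D` with positive
diagonal entries, there exist `t ≥ 2` and reals `a₂, …, a_t` with
`B = ∑_{s=2}^{t} a_s (B D²)^{s-1} B`. -/
theorem symm_matrix_higher_power_expansion {n : ℕ}
    (B D : Matrix (Fin n) (Fin n) ℝ) (hB : B.IsSymm)
    (hDdiag : D.IsDiag) (hDpos : ∀ i, 0 < D i i) :
    ∃ (t : ℕ) (a : ℕ → ℝ), 2 ≤ t ∧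
      B = ∑ s ∈ Finset.Icc 2 t, a s • ((B * D ^ 2) ^ (s - 1) * B) := by
  have hDsymm : Dᵀ = D := hDdiag.isSymm
  have hMsymm : (D * B * D)ᵀ = D * B * D := by
    rw [transpose_mul, transpose_mul, hDsymm, hB, ← mul_assoc]
  obtain ⟨t, a, ht, hMa⟩ := symm_eq_combo_of_powers (D * B * D) hMsymm
  have hpow : ∀ s, 1 ≤ s →
      (D * B * D) ^ s = D * ((B * D ^ 2) ^ (s - 1) * B) * D := by
    intro s hs
    induction s with
    | zero => omega
    | succ k ih =>
      rcases Nat.eq_zero_or_pos k with hk | hk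
      · subst hk
        simp [pow_one]
      · have ihk := ih hk
        rw [pow_succ, ihk]
        have hk1 : k - 1 + 1 = k := by omega
        have hps : (B * D ^ 2) ^ k = (B * D ^ 2) ^ (k - 1) * (B * D ^ 2) := by
          conv_lhs => rw [← hk1]
          rw [pow_succ]
        have hks : k + 1 - 1 = k := by omega
        rw [hks, hps]
        simp only [pow_two, mul_assoc]
  have hdet : D.det ≠ 0 := by
    have hdiag : Matrix.diagonal D.diag = D := hDdiag.diagonal_diag
    rw [← hdiag, Matrix.det_diagonal]
    exact ne_of_gt (Finset.prod_pos fun i _ => hDpos i)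
  have hu : IsUnit D.det := isUnit_iff_ne_zero.mpr hdet
  have h1 : D⁻¹ * D = 1 := Matrix.nonsing_inv_mul D hu
  have h2 : D * D⁻¹ = 1 := Matrix.mul_nonsing_inv D hu
  have cancel : ∀ X : Matrix (Fin n) (Fin n) ℝ, D⁻¹ * (D * X * D) * D⁻¹ = X := by
    intro X
    simp only [mul_assoc]
    rw [h2, mul_one, ← mul_assoc, h1, one_mul]
  refine ⟨t, a, ht, ?_⟩
  have hM2 : D * B * D
      = D * (∑ s ∈ Finset.Icc 2 t, a s • ((B * D ^ 2) ^ (s - 1) * B)) * D := by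
    rw [hMa, Finset.mul_sum, Finset.sum_mul]
    refine Finset.sum_congr rfl fun s hs => ?_
    have hs1 : 1 ≤ s := by
      have := (Finset.mem_Icc.mp hs).1; omega
    rw [hpow s hs1, mul_smul_comm, smul_mul_assoc]
  calc B = D⁻¹ * (D * B * D) * D⁻¹ := (cancel B).symm
    _ = D⁻¹ * (D * (∑ s ∈ Finset.Icc 2 t, a s • ((B * D ^ 2) ^ (s - 1) * B)) * D) * D⁻¹ := by
        rw [hM2]
    _ = _ := cancel _
end

section
/- Let U, W : [0,1]² → [0,1] be symmetric measurable functions, and let F be a finite simple graph on vertex set {1,…,n} (n ≥ 2) with m edges in which vertices 1 and 2 are not adjacent, where vertex 1 has degree d₁ and vertex 2 has degree d₂. Define t_{xy}(F,W) = ∫_{[0,1]^{n-2}} ∏_{ij ∈ E(F)} W(x_i,x_j) dx₃⋯dxₙ where x₁ = x, x₂ = y. Then for all x, y ∈ [0,1]: |t_{xy}(F,U) − t_{xy}(F,W)| ≤ d₁‖U−W‖_x + d₂‖U−W‖_y + (m − d₁ − d₂)‖U−W‖₁, where ‖F‖_x = ∫₀¹ |F(x,y)| dy and ‖·‖₁ is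 the L¹ norm on [0,1]². -/
open MeasureTheory Finset

/-- Partial homomorphism density `t_{xy}(F, W)` of a graph `F` on `{0, 1, …, n+1}` in a kernel
`W`, where the labeled vertices `0` and `1` are pinned to the values `x` and `y` and all other
vertices are integrated over `[0,1]`. -/
noncomputable def partialDensity {n : ℕ} (G : SimpleGraph (Fin (n + 2))) [DecidableRel G.Adj]
    (W : ℝ → ℝ → ℝ) (x y : ℝ) : ℝ :=
  ∫ v in Set.univ.pi (fun _ : Fin (n + 2) => Set.Icc (0 : ℝ) 1),
    ∏ p ∈ Finset.univ.filter (fun p : Fin (n + 2) × Fin (n + 2) => p.1 < p.2 ∧ G.Adj p.1 p.2),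
      W (Function.update (Function.update v 0 x) 1 y p.1)
        (Function.update (Function.update v 0 x) 1 y p.2)

/-- `‖F‖_x = ∫₀¹ |F(x,y)| dy`. -/
noncomputable def normAt (F : ℝ → ℝ → ℝ) (x : ℝ) : ℝ := ∫ y in Set.Icc (0 : ℝ) 1, |F x y|

/-- The `L¹` norm `‖F‖₁` of a kernel on `[0,1]²`. -/
noncomputable def normL1 (F : ℝ → ℝ → ℝ) : ℝ :=
  ∫ x in Set.Icc (0 : ℝ) 1, ∫ y in Set.Icc (0 : ℝ) 1, |F x y|


noncomputable def mu : Measure ℝ := volume.restrict (Set.Icc (0:ℝ) 1)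

instance : IsProbabilityMeasure mu := by
  constructor
  simp [mu, Real.volume_Icc]

lemma cube_eq (k : ℕ) :
    (volume : Measure (Fin k → ℝ)).restrict (Set.univ.pi fun _ => Set.Icc (0:ℝ) 1)
      = Measure.pi fun _ => mu := by
  refine (Measure.pi_eq (μ := fun _ : Fin k => mu) fun s hs => ?_).symm
  rw [Measure.restrict_apply (MeasurableSet.univ_pi hs)]
  rw [← Set.pi_inter_distrib]
  rw [volume_pi_pi]
  simp only [mu, Measure.restrict_apply (hs _)]

lemma integrable_of_bdd {α : Type*} [MeasurableSpace α] {ν : Measure α} [IsFiniteMeasure ν]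
    {f : α → ℝ} (hf : Measurable f) (hb : ∀ a, |f a| ≤ 1) : Integrable f ν := by
  refine ⟨hf.aestronglyMeasurable, HasFiniteIntegral.of_bounded (C := 1) ?_⟩
  exact Filter.Eventually.of_forall fun a => by simpa [Real.norm_eq_abs] using hb a

lemma map_pair {k : ℕ} (i j : Fin k) (hij : i ≠ j) :
    Measure.map (fun v : Fin k → ℝ => (v i, v j)) (Measure.pi fun _ => mu) = mu.prod mu := by
  have hm : Measurable fun v : Fin k → ℝ => (v i, v j) :=
    (measurable_pi_apply i).prodMk (measurable_pi_apply j)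
  refine (Measure.prod_eq fun s t hs ht => ?_).symm
  rw [Measure.map_apply hm (hs.prod ht)]
  have : (fun v : Fin k → ℝ => (v i, v j)) ⁻¹' (s ×ˢ t)
      = Set.univ.pi (fun l => if l = i then s else if l = j then t else Set.univ) := by
    ext v
    simp only [Set.mem_preimage, Set.mem_prod, Set.mem_univ_pi]
    constructor
    · rintro ⟨h1, h2⟩ l
      split_ifs with h h'
      · subst h; exact h1
      · subst h'; exact h2
      · trivial
    · intro h
      constructor
      · have := h i; simpa using this
      · have := h j; simp only [if_neg hij.symm, if_pos rfl] at this; exact this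
  rw [this, Measure.pi_pi]
  rw [← Finset.prod_subset (Finset.subset_univ {i, j})]
  · rw [Finset.prod_pair hij]
    simp [hij.symm]
  · intro l _ hl
    simp only [Finset.mem_insert, Finset.mem_singleton, not_or] at hl
    simp [hl.1, hl.2]

lemma pdIntegralPair {k : ℕ} (i j : Fin k) (hij : i ≠ j) (h : ℝ → ℝ → ℝ)
    (hm : Measurable fun p : ℝ × ℝ => h p.1 p.2) (hb : ∀ a b, |h a b| ≤ 1) :
    ∫ v : Fin k → ℝ, h (v i) (v j) ∂(Measure.pi fun _ => mu)
      = ∫ a, ∫ b, h a b ∂mu ∂mu := by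
  have hmv : Measurable fun v : Fin k → ℝ => (v i, v j) :=
    (measurable_pi_apply i).prodMk (measurable_pi_apply j)
  have : ∫ v : Fin k → ℝ, h (v i) (v j) ∂(Measure.pi fun _ => mu)
      = ∫ p : ℝ × ℝ, h p.1 p.2 ∂(mu.prod mu) := by
    rw [← map_pair i j hij, integral_map hmv.aemeasurable hm.aestronglyMeasurable]
  rw [this]
  exact integral_prod _ (integrable_of_bdd hm fun p => hb p.1 p.2)

lemma integral_eval {k : ℕ} (i j : Fin k) (hij : i ≠ j) (g : ℝ → ℝ)
    (hm : Measurable g) (hb : ∀ a, |g a| ≤ 1) :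
    ∫ v : Fin k → ℝ, g (v i) ∂(Measure.pi fun _ => mu) = ∫ a, g a ∂mu := by
  have := pdIntegralPair i j hij (fun a _ => g a)
    (hm.comp measurable_fst) (fun a _ => hb a)
  simpa using this


lemma pdTelescope {ι : Type*} [DecidableEq ι] (s : Finset ι) (f g : ι → ℝ)
    (hf : ∀ i ∈ s, f i ∈ Set.Icc (0:ℝ) 1) (hg : ∀ i ∈ s, g i ∈ Set.Icc (0:ℝ) 1) :
    |∏ i ∈ s, f i - ∏ i ∈ s, g i| ≤ ∑ i ∈ s, |f i - g i| := by
  induction s using Finset.induction_on with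
  | empty => simp
  | @insert a s ha ih =>
    rw [prod_insert ha, prod_insert ha, sum_insert ha]
    have hfa := hf a (mem_insert_self a s)
    have hga := hg a (mem_insert_self a s)
    have hf' : ∀ i ∈ s, f i ∈ Set.Icc (0:ℝ) 1 := fun i hi => hf i (mem_insert_of_mem hi)
    have hg' : ∀ i ∈ s, g i ∈ Set.Icc (0:ℝ) 1 := fun i hi => hg i (mem_insert_of_mem hi)
    have hQ0 : (0:ℝ) ≤ ∏ i ∈ s, g i := prod_nonneg fun i hi => (hg' i hi).1
    have hQ1 : ∏ i ∈ s, g i ≤ 1 := prod_le_one (fun i hi => (hg' i hi).1) fun i hi => (hg' i hi).2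
    calc |f a * ∏ i ∈ s, f i - g a * ∏ i ∈ s, g i|
        = |f a * (∏ i ∈ s, f i - ∏ i ∈ s, g i) + (f a - g a) * ∏ i ∈ s, g i| := by ring_nf
      _ ≤ |f a * (∏ i ∈ s, f i - ∏ i ∈ s, g i)| + |(f a - g a) * ∏ i ∈ s, g i| := abs_add_le _ _
      _ = |f a| * |∏ i ∈ s, f i - ∏ i ∈ s, g i| + |f a - g a| * |∏ i ∈ s, g i| := by
          rw [abs_mul, abs_mul]
      _ ≤ |f a - g a| + ∑ i ∈ s, |f i - g i| := by
          have hfa1 : |f a| ≤ 1 := abs_le.2 ⟨by linarith [hfa.1], hfa.2⟩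
          have hQb : |∏ i ∈ s, g i| ≤ 1 := abs_le.2 ⟨by linarith, hQ1⟩
          have h1 : |f a| * |∏ i ∈ s, f i - ∏ i ∈ s, g i| ≤ 1 * |∏ i ∈ s, f i - ∏ i ∈ s, g i| :=
            mul_le_mul_of_nonneg_right hfa1 (abs_nonneg _)
          have h2 : |f a - g a| * |∏ i ∈ s, g i| ≤ |f a - g a| * 1 :=
            mul_le_mul_of_nonneg_left hQb (abs_nonneg _)
          have := ih hf' hg'
          nlinarith [abs_nonneg (f a - g a)]



lemma pdOneLt {n : ℕ} (t : Fin (n + 2)) (h0 : t ≠ 0) (h1 : t ≠ 1) : (1 : Fin (n + 2)) < t := by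
  rw [Fin.lt_def]
  have hv0 : t.1 ≠ 0 := fun h => h0 (Fin.ext (by simp [h]))
  have hv1 : t.1 ≠ 1 := fun h => h1 (Fin.ext (by simp [h]))
  simp only [Fin.val_one]
  omega

lemma pdCard0 {n : ℕ} (G : SimpleGraph (Fin (n + 2))) [DecidableRel G.Adj] :
    ((univ.filter fun p : Fin (n+2) × Fin (n+2) => p.1 < p.2 ∧ G.Adj p.1 p.2).filter
      fun p => p.1 = 0).card = G.degree 0 := by
  rw [← SimpleGraph.card_neighborFinset_eq_degree]
  refine Finset.card_nbij Prod.snd ?_ ?_ ?_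
  · rintro ⟨a, b⟩ hp
    simp only [mem_coe, mem_filter, mem_univ, true_and] at hp
    obtain ⟨⟨hlt, hadj⟩, rfl⟩ := hp
    simpa [SimpleGraph.mem_neighborFinset] using hadj
  · rintro ⟨a, b⟩ hp ⟨c, d⟩ hq h
    simp only [mem_coe, mem_filter, mem_univ, true_and] at hp hq
    simp only [Prod.mk.injEq]
    exact ⟨hp.2.trans hq.2.symm, h⟩
  · rintro t ht
    simp only [coe_filter, mem_coe, SimpleGraph.mem_neighborFinset] at ht
    refine ⟨(0, t), ?_, rfl⟩
    simp only [mem_coe, mem_filter, mem_univ, true_and]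
    exact ⟨⟨Fin.pos_of_ne_zero (G.ne_of_adj ht).symm, ht⟩, trivial⟩

lemma pdCard1 {n : ℕ} (G : SimpleGraph (Fin (n + 2))) [DecidableRel G.Adj] (hnadj : ¬ G.Adj 0 1) :
    ((univ.filter fun p : Fin (n+2) × Fin (n+2) => p.1 < p.2 ∧ G.Adj p.1 p.2).filter
      fun p => p.1 = 1).card = G.degree 1 := by
  rw [← SimpleGraph.card_neighborFinset_eq_degree]
  refine Finset.card_nbij Prod.snd ?_ ?_ ?_
  · rintro ⟨a, b⟩ hp
    simp only [mem_coe, mem_filter, mem_univ, true_and] at hp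
    obtain ⟨⟨hlt, hadj⟩, rfl⟩ := hp
    simpa [SimpleGraph.mem_neighborFinset] using hadj
  · rintro ⟨a, b⟩ hp ⟨c, d⟩ hq h
    simp only [mem_coe, mem_filter, mem_univ, true_and] at hp hq
    simp only [Prod.mk.injEq]
    exact ⟨hp.2.trans hq.2.symm, h⟩
  · rintro t ht
    simp only [coe_filter, mem_coe, SimpleGraph.mem_neighborFinset] at ht
    refine ⟨(1, t), ?_, rfl⟩
    simp only [mem_coe, mem_filter, mem_univ, true_and]
    have ht0 : t ≠ 0 := fun h => hnadj (by simpa [h] using ht.symm)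
    exact ⟨⟨pdOneLt t ht0 (G.ne_of_adj ht).symm, ht⟩, trivial⟩

lemma pdCardE {n : ℕ} (G : SimpleGraph (Fin (n + 2))) [DecidableRel G.Adj] :
    (univ.filter fun p : Fin (n+2) × Fin (n+2) => p.1 < p.2 ∧ G.Adj p.1 p.2).card
      = G.edgeFinset.card := by
  have key := G.two_mul_card_edgeFinset
  have hsplit := Finset.card_filter_add_card_filter_not
    (s := univ.filter fun p : Fin (n+2) × Fin (n+2) => G.Adj p.1 p.2)
    (p := fun p => p.1 < p.2)
  have h1 : (univ.filter fun p : Fin (n+2) × Fin (n+2) => G.Adj p.1 p.2).filter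
      (fun p => p.1 < p.2) = univ.filter fun p => p.1 < p.2 ∧ G.Adj p.1 p.2 := by
    rw [filter_filter]
    apply filter_congr
    intro p _
    simp [and_comm]
  have h2 : ((univ.filter fun p : Fin (n+2) × Fin (n+2) => G.Adj p.1 p.2).filter
      (fun p => ¬ p.1 < p.2)).card
      = (univ.filter fun p : Fin (n+2) × Fin (n+2) => p.1 < p.2 ∧ G.Adj p.1 p.2).card := by
    refine Finset.card_nbij Prod.swap ?_ ?_ ?_
    · rintro ⟨a, b⟩ hp
      simp only [mem_coe, mem_filter, mem_univ, true_and, not_lt] at hp ⊢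
      obtain ⟨hadj, hle⟩ := hp
      exact ⟨lt_of_le_of_ne hle (G.ne_of_adj hadj).symm, hadj.symm⟩
    · rintro ⟨a, b⟩ _ ⟨c, d⟩ _ h
      simpa [Prod.ext_iff, and_comm] using h
    · rintro ⟨a, b⟩ hp
      simp only [coe_filter, mem_coe, mem_univ, true_and, Set.mem_setOf_eq] at hp
      refine ⟨(b, a), ?_, rfl⟩
      simp only [mem_coe, mem_filter, mem_univ, true_and, not_lt]
      exact ⟨hp.2.symm, hp.1.le⟩
  have hcard : (univ.filter fun (p : Fin (n+2) × Fin (n+2)) => G.Adj p.1 p.2)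
      = (univ.filter fun ((x, y) : Fin (n+2) × Fin (n+2)) => G.Adj x y) := by
    apply filter_congr
    rintro ⟨a, b⟩ _
    exact Iff.rfl
  rw [← hcard] at key
  have h1c := congrArg Finset.card h1
  omega


/-- if `U, W : [0,1]² → [0,1]` are symmetric measurable and `F` is a simple graph
with `m` edges in which the labeled vertices `0` and `1` are nonadjacent and have degrees
`d₁, d₂`, then `|t_{xy}(F,U) - t_{xy}(F,W)| ≤ d₁‖U-W‖_x + d₂‖U-W‖_y + (m-d₁-d₂)‖U-W‖₁`. -/
theorem partialDensity_diff_bound {n : ℕ} (G : SimpleGraph (Fin (n + 2))) [DecidableRel G.Adj]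
    (U W : ℝ → ℝ → ℝ)
    (hUmeas : Measurable fun p : ℝ × ℝ => U p.1 p.2)
    (hWmeas : Measurable fun p : ℝ × ℝ => W p.1 p.2)
    (hUsymm : ∀ x y, U x y = U y x) (hWsymm : ∀ x y, W x y = W y x)
    (hUrange : ∀ x y, U x y ∈ Set.Icc (0 : ℝ) 1)
    (hWrange : ∀ x y, W x y ∈ Set.Icc (0 : ℝ) 1)
    (hnadj : ¬ G.Adj 0 1)
    (x y : ℝ) (hx : x ∈ Set.Icc (0 : ℝ) 1) (hy : y ∈ Set.Icc (0 : ℝ) 1) :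
    |partialDensity G U x y - partialDensity G W x y| ≤
      (G.degree 0 : ℝ) * normAt (fun a b => U a b - W a b) x
      + (G.degree 1 : ℝ) * normAt (fun a b => U a b - W a b) y
      + ((G.edgeFinset.card : ℝ) - G.degree 0 - G.degree 1)
          * normL1 (fun a b => U a b - W a b) := by
  classical
  set π : Measure (Fin (n + 2) → ℝ) := Measure.pi fun _ => mu with hπ
  set E : Finset (Fin (n + 2) × Fin (n + 2)) :=
    Finset.univ.filter (fun p : Fin (n + 2) × Fin (n + 2) => p.1 < p.2 ∧ G.Adj p.1 p.2) with hE
  set w : (Fin (n + 2) → ℝ) → Fin (n + 2) → ℝ :=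
    fun v => Function.update (Function.update v 0 x) 1 y with hw
  have h01 : (0 : Fin (n + 2)) ≠ 1 := by simp [Fin.ext_iff]
  -- pointwise description of w
  have hwv : ∀ (v : Fin (n + 2) → ℝ) (t : Fin (n + 2)),
      w v t = if t = 1 then y else if t = 0 then x else v t := by
    intro v t
    rcases eq_or_ne t 1 with h1 | h1
    · subst h1; simp [hw]
    · rw [hw]
      simp only [Function.update_of_ne h1, if_neg h1]
      rcases eq_or_ne t 0 with h0 | h0
      · subst h0; simp
      · simp [Function.update_of_ne h0, if_neg h0]
  have hwt : ∀ t : Fin (n + 2), Measurable fun v : Fin (n + 2) → ℝ => w v t := by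
    intro t
    have : (fun v : Fin (n + 2) → ℝ => w v t)
        = fun v => if t = 1 then y else if t = 0 then x else v t := funext fun v => hwv v t
    rw [this]
    split_ifs
    exacts [measurable_const, measurable_const, measurable_pi_apply t]
  -- factors
  have hfm : ∀ (V : ℝ → ℝ → ℝ), (Measurable fun p : ℝ × ℝ => V p.1 p.2) →
      ∀ p : Fin (n + 2) × Fin (n + 2),
      Measurable fun v : Fin (n + 2) → ℝ => V (w v p.1) (w v p.2) := by
    intro V hV p
    exact hV.comp ((hwt p.1).prodMk (hwt p.2))
  have hdb : ∀ a b, |U a b - W a b| ≤ 1 := by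
    intro a b
    have h1 := hUrange a b; have h2 := hWrange a b
    rw [Set.mem_Icc] at h1 h2
    rw [abs_le]; constructor <;> linarith [h1.1, h1.2, h2.1, h2.2]
  -- the two product functions
  set FU : (Fin (n + 2) → ℝ) → ℝ := fun v => ∏ p ∈ E, U (w v p.1) (w v p.2) with hFU
  set FW : (Fin (n + 2) → ℝ) → ℝ := fun v => ∏ p ∈ E, W (w v p.1) (w v p.2) with hFW
  have hPU : partialDensity G U x y = ∫ v, FU v ∂π := by
    rw [partialDensity, ← hE, cube_eq (n + 2)]
  have hPW : partialDensity G W x y = ∫ v, FW v ∂π := by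
    rw [partialDensity, ← hE, cube_eq (n + 2)]
  have hFUm : Measurable FU := Finset.measurable_prod E fun p _ => hfm U hUmeas p
  have hFWm : Measurable FW := Finset.measurable_prod E fun p _ => hfm W hWmeas p
  have hFUb : ∀ v, |FU v| ≤ 1 := by
    intro v
    rw [abs_le]
    constructor
    · have := Finset.prod_nonneg (s := E)
        (f := fun p => U (w v p.1) (w v p.2)) fun p _ => (hUrange _ _).1
      linarith
    · exact Finset.prod_le_one (fun p _ => (hUrange _ _).1) fun p _ => (hUrange _ _).2
  have hFWb : ∀ v, |FW v| ≤ 1 := by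
    intro v
    rw [abs_le]
    constructor
    · have := Finset.prod_nonneg (s := E)
        (f := fun p => W (w v p.1) (w v p.2)) fun p _ => (hWrange _ _).1
      linarith
    · exact Finset.prod_le_one (fun p _ => (hWrange _ _).1) fun p _ => (hWrange _ _).2
  have hIU : Integrable FU π := integrable_of_bdd hFUm hFUb
  have hIW : Integrable FW π := integrable_of_bdd hFWm hFWb
  have hIp : ∀ p ∈ E, Integrable
      (fun v => |U (w v p.1) (w v p.2) - W (w v p.1) (w v p.2)|) π := by
    intro p _
    refine integrable_of_bdd (((hfm U hUmeas p).sub (hfm W hWmeas p)).abs) fun v => ?_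
    rw [abs_abs]; exact hdb _ _
  -- step 1: bound by the sum of integrals
  have step1 : |partialDensity G U x y - partialDensity G W x y|
      ≤ ∑ p ∈ E, ∫ v, |U (w v p.1) (w v p.2) - W (w v p.1) (w v p.2)| ∂π := by
    rw [hPU, hPW, ← integral_sub hIU hIW]
    calc |∫ v, (FU v - FW v) ∂π| ≤ ∫ v, |FU v - FW v| ∂π := by
          simpa [Real.norm_eq_abs] using
            norm_integral_le_integral_norm (μ := π) (f := fun v => FU v - FW v)
      _ ≤ ∫ v, ∑ p ∈ E, |U (w v p.1) (w v p.2) - W (w v p.1) (w v p.2)| ∂π := by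
          refine integral_mono ((hIU.sub hIW).abs) (integrable_finset_sum E hIp) fun v => ?_
          exact pdTelescope E _ _ (fun p _ => hUrange _ _) (fun p _ => hWrange _ _)
      _ = ∑ p ∈ E, ∫ v, |U (w v p.1) (w v p.2) - W (w v p.1) (w v p.2)| ∂π :=
          integral_finset_sum E hIp
  -- step 2: evaluate each integral
  set Nx : ℝ := normAt (fun a b => U a b - W a b) x with hNx
  set Ny : ℝ := normAt (fun a b => U a b - W a b) y with hNy
  set NL : ℝ := normL1 (fun a b => U a b - W a b) with hNL
  have hT : ∀ p ∈ E, (∫ v, |U (w v p.1) (w v p.2) - W (w v p.1) (w v p.2)| ∂π)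
      = if p.1 = 0 then Nx else if p.1 = 1 then Ny else NL := by
    rintro ⟨i, j⟩ hp
    rw [hE, Finset.mem_filter] at hp
    obtain ⟨-, hlt, hadj⟩ := hp
    dsimp only at hlt hadj ⊢
    by_cases hi0 : i = 0
    · subst hi0
      rw [if_pos rfl]
      have hj0 : j ≠ 0 := (G.ne_of_adj hadj).symm
      have hj1 : j ≠ 1 := fun h => hnadj (h ▸ hadj)
      have hfun : (fun v : Fin (n + 2) → ℝ => |U (w v 0) (w v j) - W (w v 0) (w v j)|)
          = fun v => |U x (v j) - W x (v j)| := by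
        funext v
        rw [hwv v 0, hwv v j, if_neg h01, if_pos rfl, if_neg hj1, if_neg hj0]
      have hg : Measurable fun t : ℝ => |U x t - W x t| :=
        ((hUmeas.comp (measurable_const.prodMk measurable_id)).sub
          (hWmeas.comp (measurable_const.prodMk measurable_id))).abs
      have h1 := integral_eval (k := n + 2) j 0 hj0 (fun t => |U x t - W x t|) hg
        (fun a => by rw [abs_abs]; exact hdb _ _)
      have h2 : (∫ a, |U x a - W x a| ∂mu) = Nx := rfl
      rw [hfun, hπ]
      exact h1.trans h2
    · by_cases hi1 : i = 1
      · subst hi1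
        rw [if_neg hi0, if_pos rfl]
        have hj1 : j ≠ 1 := (G.ne_of_adj hadj).symm
        have hj0 : j ≠ 0 := by
          rintro rfl
          rw [Fin.lt_def] at hlt
          simp at hlt
        have hfun : (fun v : Fin (n + 2) → ℝ => |U (w v 1) (w v j) - W (w v 1) (w v j)|)
            = fun v => |U y (v j) - W y (v j)| := by
          funext v
          rw [hwv v 1, hwv v j, if_pos rfl, if_neg hj1, if_neg hj0]
        have hg : Measurable fun t : ℝ => |U y t - W y t| :=
          ((hUmeas.comp (measurable_const.prodMk measurable_id)).sub
            (hWmeas.comp (measurable_const.prodMk measurable_id))).abs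
        have h1 := integral_eval (k := n + 2) j 0 hj0 (fun t => |U y t - W y t|) hg
          (fun a => by rw [abs_abs]; exact hdb _ _)
        have h2 : (∫ a, |U y a - W y a| ∂mu) = Ny := rfl
        rw [hfun, hπ]
        exact h1.trans h2
      · rw [if_neg hi0, if_neg hi1]
        have h1i : (1 : Fin (n + 2)) < i := pdOneLt i hi0 hi1
        have hj1 : j ≠ 1 := by
          rintro rfl
          exact absurd hlt (not_lt.2 h1i.le)
        have hj0 : j ≠ 0 := by
          rintro rfl
          rw [Fin.lt_def] at hlt
          simp at hlt
        have hfun : (fun v : Fin (n + 2) → ℝ => |U (w v i) (w v j) - W (w v i) (w v j)|)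
            = fun v => |U (v i) (v j) - W (v i) (v j)| := by
          funext v
          rw [hwv v i, hwv v j, if_neg hi1, if_neg hi0, if_neg hj1, if_neg hj0]
        have hg : Measurable fun p : ℝ × ℝ => |U p.1 p.2 - W p.1 p.2| :=
          (hUmeas.sub hWmeas).abs
        have h1 := pdIntegralPair (k := n + 2) i j hlt.ne (fun a b => |U a b - W a b|) hg
          (fun a b => by rw [abs_abs]; exact hdb _ _)
        have h2 : (∫ a, ∫ b, |U a b - W a b| ∂mu ∂mu) = NL := rfl
        rw [hfun, hπ]
        exact h1.trans h2
  -- step 3: sum up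
  have step3 : (∑ p ∈ E, ∫ v, |U (w v p.1) (w v p.2) - W (w v p.1) (w v p.2)| ∂π)
      = (G.degree 0 : ℝ) * Nx + (G.degree 1 : ℝ) * Ny
        + ((G.edgeFinset.card : ℝ) - G.degree 0 - G.degree 1) * NL := by
    have hcE : (E.card : ℝ) = G.edgeFinset.card := by
      rw [hE]; exact_mod_cast pdCardE G
    have hc0 : ((E.filter fun p => p.1 = 0).card : ℝ) = G.degree 0 := by
      rw [hE]; exact_mod_cast pdCard0 G
    have hs1 : (E.filter fun p => ¬ p.1 = 0).filter (fun p => p.1 = 1)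
        = E.filter (fun p => p.1 = 1) := by
      rw [Finset.filter_filter]
      apply Finset.filter_congr
      intro p _
      constructor
      · exact And.right
      · intro h; exact ⟨by rw [h]; exact h01.symm, h⟩
    have hc1 : (((E.filter fun p => ¬ p.1 = 0).filter fun p => p.1 = 1).card : ℝ)
        = G.degree 1 := by
      rw [hs1, hE]; exact_mod_cast pdCard1 G hnadj
    have c1 : ((E.filter fun p => p.1 = 0).card : ℝ)
        + ((E.filter fun p => ¬ p.1 = 0).card : ℝ) = (E.card : ℝ) := by
      exact_mod_cast Finset.card_filter_add_card_filter_not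
        (s := E) (p := fun p => p.1 = 0)
    have c2 : (((E.filter fun p => ¬ p.1 = 0).filter fun p => p.1 = 1).card : ℝ)
        + (((E.filter fun p => ¬ p.1 = 0).filter fun p => ¬ p.1 = 1).card : ℝ)
        = ((E.filter fun p => ¬ p.1 = 0).card : ℝ) := by
      exact_mod_cast Finset.card_filter_add_card_filter_not
        (s := E.filter fun p => ¬ p.1 = 0) (p := fun p => p.1 = 1)
    have hc2 : (((E.filter fun p => ¬ p.1 = 0).filter fun p => ¬ p.1 = 1).card : ℝ)
        = (G.edgeFinset.card : ℝ) - G.degree 0 - G.degree 1 := by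
      linarith
    have e0 : (∑ p ∈ E.filter (fun p => p.1 = 0),
        ∫ v, |U (w v p.1) (w v p.2) - W (w v p.1) (w v p.2)| ∂π)
        = (G.degree 0 : ℝ) * Nx := by
      calc (∑ p ∈ E.filter (fun p => p.1 = 0),
          ∫ v, |U (w v p.1) (w v p.2) - W (w v p.1) (w v p.2)| ∂π)
          = ∑ _p ∈ E.filter (fun p => p.1 = 0), Nx := by
            refine Finset.sum_congr rfl fun p hp => ?_
            rw [Finset.mem_filter] at hp
            rw [hT p hp.1, if_pos hp.2]
        _ = _ := by rw [Finset.sum_const, nsmul_eq_mul, hc0]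
    have e1 : (∑ p ∈ (E.filter fun p => ¬ p.1 = 0).filter (fun p => p.1 = 1),
        ∫ v, |U (w v p.1) (w v p.2) - W (w v p.1) (w v p.2)| ∂π)
        = (G.degree 1 : ℝ) * Ny := by
      calc (∑ p ∈ (E.filter fun p => ¬ p.1 = 0).filter (fun p => p.1 = 1),
          ∫ v, |U (w v p.1) (w v p.2) - W (w v p.1) (w v p.2)| ∂π)
          = ∑ _p ∈ (E.filter fun p => ¬ p.1 = 0).filter (fun p => p.1 = 1), Ny := by
            refine Finset.sum_congr rfl fun p hp => ?_
            rw [Finset.mem_filter, Finset.mem_filter] at hp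
            rw [hT p hp.1.1, if_neg hp.1.2, if_pos hp.2]
        _ = _ := by rw [Finset.sum_const, nsmul_eq_mul, hc1]
    have e2 : (∑ p ∈ (E.filter fun p => ¬ p.1 = 0).filter (fun p => ¬ p.1 = 1),
        ∫ v, |U (w v p.1) (w v p.2) - W (w v p.1) (w v p.2)| ∂π)
        = ((G.edgeFinset.card : ℝ) - G.degree 0 - G.degree 1) * NL := by
      calc (∑ p ∈ (E.filter fun p => ¬ p.1 = 0).filter (fun p => ¬ p.1 = 1),
          ∫ v, |U (w v p.1) (w v p.2) - W (w v p.1) (w v p.2)| ∂π)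
          = ∑ _p ∈ (E.filter fun p => ¬ p.1 = 0).filter (fun p => ¬ p.1 = 1), NL := by
            refine Finset.sum_congr rfl fun p hp => ?_
            rw [Finset.mem_filter, Finset.mem_filter] at hp
            rw [hT p hp.1.1, if_neg hp.1.2, if_neg hp.2]
        _ = _ := by rw [Finset.sum_const, nsmul_eq_mul, hc2]
    rw [← Finset.sum_filter_add_sum_filter_not E (fun p => p.1 = 0),
      ← Finset.sum_filter_add_sum_filter_not (E.filter fun p => ¬ p.1 = 0) (fun p => p.1 = 1),
      e0, e1, e2]
    ring
  calc |partialDensity G U x y - partialDensity G W x y|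
      ≤ ∑ p ∈ E, ∫ v, |U (w v p.1) (w v p.2) - W (w v p.1) (w v p.2)| ∂π := step1
    _ = _ := by rw [step3]
end

section
/- Let V be a finite-dimensional commutative real algebra equipped with a bilinear form ⟨x,y⟩ = f(xy) (f linear) that is positive semidefinite and nondegenerate on V, satisfying ⟨xy,z⟩ = ⟨x,yz⟩. Then V has a basis p₁,…,p_N of idempotents with pᵢ² = pᵢ and pᵢpⱼ = 0 for i ≠ j. -/
/-- a finite-dimensional commutative real algebra with a linear functional `f`
whose associated bilinear form `⟨x,y⟩ = f(xy)` is positive semidefinite, nondegenerate and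
associative has a basis of pairwise-orthogonal idempotents. -/
theorem exists_idempotent_basis (V : Type*) [CommRing V] [Algebra ℝ V] [Module.Finite ℝ V]
    (f : V →ₗ[ℝ] ℝ)
    (hpsd : ∀ x : V, 0 ≤ f (x * x))
    (hnd : ∀ x : V, (∀ y : V, f (x * y) = 0) → x = 0)
    (hassoc : ∀ x y z : V, f ((x * y) * z) = f (x * (y * z))) :
    ∃ (N : ℕ) (b : Module.Basis (Fin N) ℝ V),
      (∀ i, b i * b i = b i) ∧ ∀ i j, i ≠ j → b i * b j = 0 := by
  classical
  -- definiteness of the form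
  have hdef : ∀ x : V, f (x * x) = 0 → x = 0 := by
    intro x hx
    refine hnd x fun y => ?_
    by_contra hxy
    set t : ℝ := -(f (y * y) + 1) / (2 * f (x * y)) with ht
    have h0 := hpsd (t • x + y)
    have hexp : (t • x + y) * (t • x + y)
        = (t * t) • (x * x) + (2 * t) • (x * y) + y * y := by
      simp only [add_mul, mul_add, smul_mul_assoc, mul_smul_comm, smul_smul, mul_comm y x]
      module
    have hval : f ((t • x + y) * (t • x + y)) = -1 := by
      rw [hexp, map_add, map_add, map_smul, map_smul, hx, smul_eq_mul, smul_eq_mul, mul_zero,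
        ht]
      field_simp
      ring
    rw [hval] at h0
    linarith
  have hpos : ∀ x : V, x ≠ 0 → 0 < f (x * x) := fun x hx =>
    lt_of_le_of_ne (hpsd x) (fun h => hx (hdef x h.symm))
  -- it suffices to find a finite set of nonzero pairwise-orthogonal idempotents spanning V
  suffices hfin : ∃ s : Finset V, (∀ p ∈ s, p * p = p) ∧ (∀ p ∈ s, p ≠ 0) ∧
      (∀ p ∈ s, ∀ q ∈ s, p ≠ q → p * q = 0) ∧ Submodule.span ℝ (s : Set V) = ⊤ by
    obtain ⟨s, hidem, hne, hprod, hspan⟩ := hfin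
    have hli : LinearIndependent ℝ (fun p : s => (p : V)) := by
      rw [Fintype.linearIndependent_iff]
      intro g hg j
      have h1 : f ((j : V) * (∑ i : s, g i • (i : V))) = g j * f ((j : V) * (j : V)) := by
        rw [Finset.mul_sum, map_sum]
        rw [Finset.sum_congr rfl (fun i _ => by
          rw [mul_smul_comm, map_smul, smul_eq_mul] :
            ∀ i ∈ Finset.univ, f ((j:V) * (g i • (i:V))) = g i * f ((j:V) * (i:V)))]
        refine Finset.sum_eq_single j (fun i _ hij => ?_) (by simp)
        have hzij : (j : V) * (i : V) = 0 :=
          hprod _ j.2 _ i.2 (fun h => hij (Subtype.ext h.symm))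
        rw [hzij, map_zero, mul_zero]
      rw [hg, mul_zero, map_zero] at h1
      have hj := hpos (j : V) (hne _ j.2)
      rcases mul_eq_zero.1 h1.symm with h | h
      · exact h
      · exact absurd h (ne_of_gt hj)
    have hspan' : ⊤ ≤ Submodule.span ℝ (Set.range (fun p : s => (p : V))) := by
      have hr : Set.range (fun p : s => (p : V)) = (s : Set V) := by
        ext v; simp
      rw [hr]
      exact le_of_eq hspan.symm
    let b₀ : Module.Basis s ℝ V := Module.Basis.mk hli hspan'
    refine ⟨s.card, b₀.reindex s.equivFin, fun i => ?_, fun i j hij => ?_⟩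
    · rw [Module.Basis.reindex_apply, Module.Basis.mk_apply]
      exact hidem _ (s.equivFin.symm i).2
    · rw [Module.Basis.reindex_apply, Module.Basis.reindex_apply, Module.Basis.mk_apply, Module.Basis.mk_apply]
      refine hprod _ (s.equivFin.symm i).2 _ (s.equivFin.symm j).2 ?_
      exact Subtype.coe_injective.ne (s.equivFin.symm.injective.ne hij)
  -- set up the inner product space structure
  letI cV : InnerProductSpace.Core ℝ V :=
  { inner := fun x y => f (x * y)
    conj_inner_symm := fun x y => by simp [mul_comm]
    re_inner_nonneg := fun x => hpsd x
    add_left := fun x y z => by simp [add_mul]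
    smul_left := fun x y r => by simp [smul_mul_assoc]
    definite := fun x hx => hdef x hx }
  letI : NormedAddCommGroup V := cV.toNormedAddCommGroup
  letI : InnerProductSpace ℝ V := InnerProductSpace.ofCore cV.toCore
  haveI : FiniteDimensional ℝ V := ‹Module.Finite ℝ V›
  have hsym : ∀ x : V, (LinearMap.mulLeft ℝ x).IsSymmetric := by
    intro x v w
    show f ((x * v) * w) = f (v * (x * w))
    exact congrArg f (by ring)
  -- the key induction on dimension
  have key : ∀ n : ℕ, ∀ W : Submodule ℝ V, Module.finrank ℝ W ≤ n →
      (∀ v ∈ W, ∀ w ∈ W, v * w ∈ W) →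
      ∃ s : Finset V, (s : Set V) ⊆ (W : Set V) ∧ (∀ p ∈ s, p * p = p) ∧ (∀ p ∈ s, p ≠ 0) ∧
        (∀ p ∈ s, ∀ q ∈ s, p ≠ q → p * q = 0) ∧ Submodule.span ℝ (s : Set V) = W := by
    intro n
    induction n with
    | zero =>
      intro W hW _
      have hWbot : W = ⊥ := Submodule.finrank_eq_zero.1 (Nat.le_zero.1 hW)
      exact ⟨∅, by simp, by simp, by simp, by simp, by simp [hWbot]⟩
    | succ n ih =>
      intro W hWn hWm
      by_cases hscal : ∀ x ∈ W, ∃ c : ℝ, ∀ y ∈ W, x * y = c • y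
      · -- all multiplications are scalar on W : dim ≤ 1
        by_cases hW0 : W = ⊥
        · exact ⟨∅, by simp, by simp, by simp, by simp, by simp [hW0]⟩
        obtain ⟨x₀, hx₀W, hx₀⟩ := Submodule.exists_mem_ne_zero_of_ne_bot hW0
        obtain ⟨c, hc⟩ := hscal x₀ hx₀W
        have hcne : c ≠ 0 := by
          intro h
          apply hx₀
          apply hdef
          rw [hc x₀ hx₀W, h, zero_smul, map_zero]
        set e : V := c⁻¹ • x₀ with he
        have heW : e ∈ W := W.smul_mem _ hx₀W
        have hee : e * e = e := by
          rw [he, smul_mul_assoc, mul_smul_comm, hc x₀ hx₀W, smul_smul, smul_smul]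
          rw [mul_assoc, inv_mul_cancel₀ hcne, mul_one]
        have hene : e ≠ 0 := smul_ne_zero (inv_ne_zero hcne) hx₀
        refine ⟨{e}, by simpa using heW, by simpa using hee, by simpa using hene,
          by simp +contextual, ?_⟩
        apply le_antisymm
        · rw [Submodule.span_le]; simpa using heW
        · intro y hy
          obtain ⟨d, hd⟩ := hscal y hy
          have h1 : x₀ * y = c • y := hc y hy
          have h2 : y * x₀ = d • x₀ := hd x₀ hx₀W
          have h3 : y = (c⁻¹ * d) • x₀ := by
            rw [mul_comm] at h2
            rw [mul_smul, ← h2, h1, smul_smul, inv_mul_cancel₀ hcne, one_smul]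
          rw [Finset.coe_singleton]
          rw [Submodule.mem_span_singleton]
          exact ⟨c⁻¹ * d * c, by rw [h3, he, smul_smul, mul_assoc, mul_inv_cancel₀ hcne,
            mul_one]⟩
      · push_neg at hscal
        obtain ⟨x, hxW, hx⟩ := hscal
        have hinv : ∀ v ∈ W, LinearMap.mulLeft ℝ x v ∈ W := fun v hv => hWm x hxW v hv
        set T := (LinearMap.mulLeft ℝ x).restrict hinv with hT
        have hTsym : T.IsSymmetric := (hsym x).restrict_invariant hinv
        set Emap : ℝ → Submodule ℝ V :=
          fun μ => (Module.End.eigenspace T μ).map W.subtype with hEmap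
        have hEmem : ∀ (μ : ℝ) (v : V), v ∈ Emap μ ↔ v ∈ W ∧ x * v = μ • v := by
          intro μ v
          simp only [hEmap, Submodule.mem_map, Module.End.mem_eigenspace_iff]
          constructor
          · rintro ⟨w, hw, rfl⟩
            refine ⟨w.2, ?_⟩
            have := congrArg (W.subtype) hw
            simpa [hT, LinearMap.restrict_apply] using this
          · rintro ⟨hvW, hv⟩
            exact ⟨⟨v, hvW⟩, Subtype.ext (by simpa [hT, LinearMap.restrict_apply] using hv), rfl⟩
        have hEle : ∀ μ, Emap μ ≤ W := fun μ => Submodule.map_subtype_le _ _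
        have hiSup : (⨆ μ : ℝ, Emap μ) = W := by
          have hbot := hTsym.orthogonalComplement_iSup_eigenspaces_eq_bot
          rw [Submodule.orthogonal_eq_bot_iff] at hbot
          calc (⨆ μ : ℝ, Emap μ)
              = Submodule.map W.subtype (⨆ μ, Module.End.eigenspace T μ) :=
                (Submodule.map_iSup _ _).symm
            _ = Submodule.map W.subtype ⊤ := by rw [hbot]
            _ = W := by rw [Submodule.map_top, Submodule.range_subtype]
        have hmul : ∀ (μ : ℝ) (v : V), v ∈ Emap μ → ∀ w ∈ W, v * w ∈ Emap μ := by
          intro μ v hv w hw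
          rw [hEmem] at hv ⊢
          exact ⟨hWm v hv.1 w hw, by rw [← mul_assoc, hv.2, smul_mul_assoc]⟩
        have hzero : ∀ (μ ν : ℝ), μ ≠ ν → ∀ v ∈ Emap μ, ∀ w ∈ Emap ν, v * w = 0 := by
          intro μ ν hμν v hv w hw
          rw [hEmem] at hv hw
          have h1 : x * (v * w) = μ • (v * w) := by
            rw [← mul_assoc, hv.2, smul_mul_assoc]
          have h2 : x * (v * w) = ν • (v * w) := by
            rw [mul_comm v w, ← mul_assoc, hw.2, smul_mul_assoc, mul_comm w v]
          have h3 : (μ - ν) • (v * w) = 0 := by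
            rw [sub_smul, ← h1, ← h2, sub_self]
          exact (smul_eq_zero.1 h3).resolve_left (sub_ne_zero.2 hμν)
        -- there are two distinct eigenvalues with nonzero eigenspaces
        have h2ev : ∃ μ₀ μ₁ : ℝ, μ₀ ≠ μ₁ ∧ Emap μ₀ ≠ ⊥ ∧ Emap μ₁ ≠ ⊥ := by
          by_contra hcon
          push_neg at hcon
          by_cases hall : ∀ μ : ℝ, Emap μ = ⊥
          · have hWbot : W = ⊥ := by
              rw [← hiSup]
              simp [hall]
            obtain ⟨y, hy, hyne⟩ := hx 0
            rw [hWbot] at hy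
            simp only [Submodule.mem_bot] at hy
            exact hyne (by simp [hy])
          · push_neg at hall
            obtain ⟨μ₀, hμ₀⟩ := hall
            have honly : ∀ μ : ℝ, μ ≠ μ₀ → Emap μ = ⊥ := fun μ hμ =>
              hcon μ₀ μ (Ne.symm hμ) hμ₀
            have hWE : W ≤ Emap μ₀ := by
              rw [← hiSup]
              refine iSup_le fun μ => ?_
              by_cases h : μ = μ₀
              · rw [h]
              · rw [honly μ h]; exact bot_le
            obtain ⟨y, hy, hyne⟩ := hx μ₀
            exact hyne ((hEmem μ₀ y).1 (hWE hy)).2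
        obtain ⟨μ₀, μ₁, hμne, hμ₀, hμ₁⟩ := h2ev
        set E : Submodule ℝ V := Emap μ₀ with hE
        set F : Submodule ℝ V := ⨆ μ : ℝ, ⨆ _ : μ ≠ μ₀, Emap μ with hF
        have hFle : F ≤ W := iSup₂_le fun μ _ => hEle μ
        have hE₁F : Emap μ₁ ≤ F := le_iSup₂ (f := fun (μ : ℝ) (_ : μ ≠ μ₀) => Emap μ) μ₁ (Ne.symm hμne)
        have hEFsup : E ⊔ F = W := by
          refine le_antisymm (sup_le (hEle μ₀) hFle) ?_
          rw [← hiSup]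
          refine iSup_le fun μ => ?_
          by_cases h : μ = μ₀
          · rw [h]; exact le_sup_left
          · exact le_trans (le_iSup₂ (f := fun (μ : ℝ) (_ : μ ≠ μ₀) => Emap μ) μ h) le_sup_right
        have hEF0 : ∀ v ∈ E, ∀ w ∈ F, v * w = 0 := by
          intro v hv w hw
          have hker : F ≤ LinearMap.ker (LinearMap.mulLeft ℝ v) := by
            refine iSup₂_le fun ν hν w' hw' => ?_
            simp only [LinearMap.mem_ker, LinearMap.mulLeft_apply]
            exact hzero μ₀ ν (Ne.symm hν) v hv w' hw'
          simpa using hker hw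
        have hFstep : ∀ w ∈ F, ∀ ν : ℝ, ν ≠ μ₀ → ∀ v ∈ Emap ν, v * w ∈ F := by
          intro w hw ν hν v hv
          have hcom : F ≤ Submodule.comap (LinearMap.mulLeft ℝ v) F := by
            refine iSup₂_le fun ρ hρ w' hw' => ?_
            simp only [Submodule.mem_comap, LinearMap.mulLeft_apply]
            exact le_iSup₂ (f := fun (μ : ℝ) (_ : μ ≠ μ₀) => Emap μ) ν hν (hmul ν v hv w' (hEle ρ hw'))
          exact hcom hw
        have hFmul : ∀ v ∈ F, ∀ w ∈ F, v * w ∈ F := by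
          intro v hv w hw
          have hcom : F ≤ Submodule.comap (LinearMap.mulRight ℝ w) F := by
            refine iSup₂_le fun ν hν v' hv' => ?_
            simp only [Submodule.mem_comap, LinearMap.mulRight_apply]
            exact hFstep w hw ν hν v' hv'
          exact hcom hv
        -- strict dimension drops
        have hEltW : E < W := by
          refine lt_of_le_of_ne (hEle μ₀) ?_
          intro hEW
          obtain ⟨w₁, hw₁W, hw₁ne⟩ := Submodule.exists_mem_ne_zero_of_ne_bot hμ₁
          have hw₁E : w₁ ∈ E := by rw [hEW]; exact hEle μ₁ hw₁W
          have : w₁ * w₁ = 0 := hzero μ₀ μ₁ hμne w₁ hw₁E w₁ hw₁W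
          exact hw₁ne (hdef w₁ (by rw [this, map_zero]))
        have hFltW : F < W := by
          refine lt_of_le_of_ne hFle ?_
          intro hFW
          obtain ⟨e, heE, hene⟩ := Submodule.exists_mem_ne_zero_of_ne_bot hμ₀
          have hker : F ≤ LinearMap.ker (f ∘ₗ LinearMap.mulLeft ℝ e) := by
            refine iSup₂_le fun ν hν w hw => ?_
            simp only [LinearMap.mem_ker, LinearMap.comp_apply, LinearMap.mulLeft_apply]
            have heE' := (hEmem μ₀ e).1 heE
            have hw' := (hEmem ν w).1 hw
            have h1 : f ((x * e) * w) = μ₀ * f (e * w) := by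
              rw [heE'.2, smul_mul_assoc, map_smul, smul_eq_mul]
            have h2 : f ((x * e) * w) = ν * f (e * w) := by
              have hq : (x * e) * w = e * (x * w) := by ring
              rw [hq, hw'.2, mul_smul_comm, map_smul, smul_eq_mul]
            have h3 : (μ₀ - ν) * f (e * w) = 0 := by
              rw [sub_mul, ← h1, ← h2, sub_self]
            exact (mul_eq_zero.1 h3).resolve_left (sub_ne_zero.2 (Ne.symm hν))
          have heF : e ∈ F := by rw [hFW]; exact hEle μ₀ heE
          have : f (e * e) = 0 := by simpa using hker heF
          exact hene (hdef e this)
        have hEn : Module.finrank ℝ E ≤ n := by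
          have h1 := Submodule.finrank_lt_finrank_of_lt hEltW
          have h2 := hWn
          omega
        have hFn : Module.finrank ℝ F ≤ n := by
          have h1 := Submodule.finrank_lt_finrank_of_lt hFltW
          have h2 := hWn
          omega
        obtain ⟨sE, hsEsub, hsEidem, hsEne, hsEprod, hsEspan⟩ :=
          ih E hEn (fun v hv w hw => hmul μ₀ v hv w (hEle μ₀ hw))
        obtain ⟨sF, hsFsub, hsFidem, hsFne, hsFprod, hsFspan⟩ := ih F hFn hFmul
        refine ⟨sE ∪ sF, ?_, ?_, ?_, ?_, ?_⟩
        · rw [Finset.coe_union]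
          refine Set.union_subset (hsEsub.trans ?_) (hsFsub.trans ?_)
          · exact hEle μ₀
          · exact hFle
        · intro p hp
          rcases Finset.mem_union.1 hp with h | h
          · exact hsEidem p h
          · exact hsFidem p h
        · intro p hp
          rcases Finset.mem_union.1 hp with h | h
          · exact hsEne p h
          · exact hsFne p h
        · intro p hp q hq hpq
          rcases Finset.mem_union.1 hp with h | h <;> rcases Finset.mem_union.1 hq with h' | h'
          · exact hsEprod p h q h' hpq
          · exact hEF0 p (hsEsub h) q (hsFsub h')
          · rw [mul_comm]; exact hEF0 q (hsEsub h') p (hsFsub h)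
          · exact hsFprod p h q h' hpq
        · rw [Finset.coe_union, Submodule.span_union, hsEspan, hsFspan, hEFsup]
  obtain ⟨s, _, hidem, hne, hprod, hspan⟩ :=
    key (Module.finrank ℝ V) ⊤ (le_of_eq (finrank_top ℝ V)) (fun _ _ _ _ => Submodule.mem_top)
  exact ⟨s, hidem, hne, hprod, by rw [hspan]⟩
end
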